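/- The function C(u₁,u₂,u₃) = K₃ · ((u₂-u₁)/((u₃-u₂)(u₃-u₁)))^{1/3}, defined for real u₁ < u₂ < u₃ (with K₃ any constant), satisfies the PDE (2/(u₁-u₂)) ∂_{u₁}C + (2/(u₃-u₂)) ∂_{u₃}C + 3 ∂²_{u₂}C − (2/(3(u₃-u₂)²)) C = 0. -/

import Mathlib

open Real

set_option maxHeartbeats 2000000 in
/-- The Cardy-type function `C(u₁,u₂,u₃) = K₃ ((u₂-u₁)/((u₃-u₂)(u₃-u₁)))^{1/3}`
satisfies the PDE
`(2/(u₁-u₂)) ∂₁C + (2/(u₃-u₂)) ∂₃C + 3 ∂₂²C − (2/(3(u₃-u₂)²)) C = 0`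
on the set `{u₁ < u₂ < u₃}`. -/
theorem cardy_pde (K₃ : ℝ)
    (C : ℝ → ℝ → ℝ → ℝ)
    (hC : ∀ u₁ u₂ u₃ : ℝ, C u₁ u₂ u₃ =
      K₃ * ((u₂ - u₁) / ((u₃ - u₂) * (u₃ - u₁))) ^ (1/3 : ℝ))
    (a b c : ℝ) (hab : a < b) (hbc : b < c) :
    (2 / (a - b)) * deriv (fun x => C x b c) a
      + (2 / (c - b)) * deriv (fun z => C a b z) c
      + 3 * deriv (deriv (fun y => C a y c)) b
      - (2 / (3 * (c - b) ^ 2)) * C a b c = 0 := by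
  have hac : a < c := hab.trans hbc
  have hba : (0:ℝ) < b - a := by linarith
  have hcb : (0:ℝ) < c - b := by linarith
  have hca : (0:ℝ) < c - a := by linarith
  have hden : (c - b) * (c - a) ≠ 0 := (mul_pos hcb hca).ne'
  have hq : 0 < (b - a) / ((c - b) * (c - a)) := div_pos hba (mul_pos hcb hca)
  set q : ℝ := (b - a) / ((c - b) * (c - a)) with hqdef
  -- derivative in first variable at a
  have d1 : deriv (fun x : ℝ => K₃ * ((b - x) / ((c - b) * (c - x))) ^ (1/3 : ℝ)) a
      = K₃ * (((-1) * ((c - b) * (c - a)) - (b - a) * ((c - b) * (-1))) / ((c - b) * (c - a))^2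
          * (1/3) * q ^ ((1:ℝ)/3 - 1)) := by
    have hnum : HasDerivAt (fun x : ℝ => b - x) (-1) a := by
      simpa using (hasDerivAt_id a).const_sub b
    have hd2 : HasDerivAt (fun x : ℝ => (c - b) * (c - x)) ((c - b) * (-1)) a :=
      ((hasDerivAt_id a).const_sub c).const_mul (c - b)
    have hf : HasDerivAt (fun x : ℝ => (b - x) / ((c - b) * (c - x)))
        (((-1) * ((c - b) * (c - a)) - (b - a) * ((c - b) * (-1))) / ((c - b) * (c - a))^2) a :=
      hnum.div hd2 hden
    have := ((hf.rpow_const (p := (1/3:ℝ)) (Or.inl hq.ne')).const_mul K₃).deriv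
    simpa [hqdef, mul_assoc] using this
  -- derivative in third variable at c
  have d3 : deriv (fun z : ℝ => K₃ * ((b - a) / ((z - b) * (z - a))) ^ (1/3 : ℝ)) c
      = K₃ * ((0 * ((c - b) * (c - a)) - (b - a) * (1 * (c - a) + (c - b) * 1))
            / ((c - b) * (c - a))^2
          * (1/3) * q ^ ((1:ℝ)/3 - 1)) := by
    have hnum : HasDerivAt (fun _ : ℝ => b - a) 0 c := hasDerivAt_const c (b - a)
    have hd2 : HasDerivAt (fun z : ℝ => (z - b) * (z - a)) (1 * (c - a) + (c - b) * 1) c :=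
      ((hasDerivAt_id c).sub_const b).mul ((hasDerivAt_id c).sub_const a)
    have hf : HasDerivAt (fun z : ℝ => (b - a) / ((z - b) * (z - a)))
        ((0 * ((c - b) * (c - a)) - (b - a) * (1 * (c - a) + (c - b) * 1))
          / ((c - b) * (c - a))^2) c :=
      hnum.div hd2 hden
    have := ((hf.rpow_const (p := (1/3:ℝ)) (Or.inl hq.ne')).const_mul K₃).deriv
    simpa [hqdef, mul_assoc] using this
  -- first derivative in second variable, on Ioo a c
  have hD : ∀ y ∈ Set.Ioo a c,
      HasDerivAt (fun y : ℝ => K₃ * ((y - a) / ((c - y) * (c - a))) ^ (1/3 : ℝ))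
        (K₃ * ((1 * ((c - y) * (c - a)) - (y - a) * ((-1) * (c - a))) / ((c - y) * (c - a))^2
          * (1/3) * ((y - a) / ((c - y) * (c - a))) ^ ((1:ℝ)/3 - 1))) y := by
    intro y hy
    have h1 : 0 < y - a := by linarith [hy.1]
    have h2 : 0 < c - y := by linarith [hy.2]
    have hdy : (c - y) * (c - a) ≠ 0 := (mul_pos h2 hca).ne'
    have hqy : 0 < (y - a) / ((c - y) * (c - a)) := div_pos h1 (mul_pos h2 hca)
    have hnum : HasDerivAt (fun y : ℝ => y - a) 1 y := (hasDerivAt_id y).sub_const a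
    have hd2 : HasDerivAt (fun y : ℝ => (c - y) * (c - a)) ((-1) * (c - a)) y := by
      have := ((hasDerivAt_id y).const_sub c).mul_const (c - a)
      simpa using this
    have hf : HasDerivAt (fun y : ℝ => (y - a) / ((c - y) * (c - a)))
        ((1 * ((c - y) * (c - a)) - (y - a) * ((-1) * (c - a))) / ((c - y) * (c - a))^2) y :=
      hnum.div hd2 hdy
    have := (hf.rpow_const (p := (1/3:ℝ)) (Or.inl hqy.ne')).const_mul K₃
    simpa [mul_assoc] using this
  have hEq : deriv (fun y : ℝ => K₃ * ((y - a) / ((c - y) * (c - a))) ^ (1/3 : ℝ))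
      =ᶠ[nhds b] (fun y : ℝ =>
        K₃ * ((1 * ((c - y) * (c - a)) - (y - a) * ((-1) * (c - a))) / ((c - y) * (c - a))^2
          * (1/3) * ((y - a) / ((c - y) * (c - a))) ^ ((1:ℝ)/3 - 1))) :=
    Filter.eventuallyEq_of_mem (Ioo_mem_nhds hab hbc) (fun y hy => (hD y hy).deriv)
  -- second derivative in second variable at b
  have hNb : HasDerivAt (fun y : ℝ => 1 * ((c - y) * (c - a)) - (y - a) * ((-1) * (c - a)))
      (1 * ((-1) * (c - a)) - 1 * ((-1) * (c - a))) b := by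
    have hA : HasDerivAt (fun y : ℝ => 1 * ((c - y) * (c - a))) (1 * ((-1) * (c - a))) b := by
      have := (((hasDerivAt_id b).const_sub c).mul_const (c - a)).const_mul 1
      simpa using this
    have hB : HasDerivAt (fun y : ℝ => (y - a) * ((-1) * (c - a))) (1 * ((-1) * (c - a))) b :=
      ((hasDerivAt_id b).sub_const a).mul_const _
    exact hA.sub hB
  have hDenb : HasDerivAt (fun y : ℝ => ((c - y) * (c - a))^2)
      (2 * ((c - b) * (c - a)) ^ 1 * ((-1) * (c - a))) b := by
    have hbase : HasDerivAt (fun y : ℝ => (c - y) * (c - a)) ((-1) * (c - a)) b := by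
      simpa using ((hasDerivAt_id b).const_sub c).mul_const (c - a)
    simpa using hbase.fun_pow 2
  have hdenq : ((c - b) * (c - a))^2 ≠ 0 := pow_ne_zero 2 hden
  have hRb : HasDerivAt
      (fun y : ℝ => (1 * ((c - y) * (c - a)) - (y - a) * ((-1) * (c - a))) / ((c - y) * (c - a))^2)
      (((1 * ((-1) * (c - a)) - 1 * ((-1) * (c - a))) * ((c - b) * (c - a))^2
        - (1 * ((c - b) * (c - a)) - (b - a) * ((-1) * (c - a)))
            * (2 * ((c - b) * (c - a)) ^ 1 * ((-1) * (c - a))))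
        / (((c - b) * (c - a))^2)^2) b :=
    hNb.div hDenb hdenq
  have hfb : HasDerivAt (fun y : ℝ => (y - a) / ((c - y) * (c - a)))
      ((1 * ((c - b) * (c - a)) - (b - a) * ((-1) * (c - a))) / ((c - b) * (c - a))^2) b := by
    have hnum : HasDerivAt (fun y : ℝ => y - a) 1 b := (hasDerivAt_id b).sub_const a
    have hd2 : HasDerivAt (fun y : ℝ => (c - y) * (c - a)) ((-1) * (c - a)) b := by
      simpa using ((hasDerivAt_id b).const_sub c).mul_const (c - a)
    exact hnum.div hd2 hden
  have hPb : HasDerivAt (fun y : ℝ => ((y - a) / ((c - y) * (c - a))) ^ ((1:ℝ)/3 - 1))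
      ((1 * ((c - b) * (c - a)) - (b - a) * ((-1) * (c - a))) / ((c - b) * (c - a))^2
        * ((1:ℝ)/3 - 1) * q ^ ((1:ℝ)/3 - 1 - 1)) b :=
    hfb.rpow_const (p := ((1:ℝ)/3 - 1)) (Or.inl hq.ne')
  have hD2 : HasDerivAt (fun y : ℝ =>
      K₃ * ((1 * ((c - y) * (c - a)) - (y - a) * ((-1) * (c - a))) / ((c - y) * (c - a))^2
        * (1/3) * ((y - a) / ((c - y) * (c - a))) ^ ((1:ℝ)/3 - 1)))
      (K₃ * (((((1 * ((-1) * (c - a)) - 1 * ((-1) * (c - a))) * ((c - b) * (c - a))^2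
        - (1 * ((c - b) * (c - a)) - (b - a) * ((-1) * (c - a)))
            * (2 * ((c - b) * (c - a)) ^ 1 * ((-1) * (c - a))))
        / (((c - b) * (c - a))^2)^2) * (1/3)) * q ^ ((1:ℝ)/3 - 1)
        + ((1 * ((c - b) * (c - a)) - (b - a) * ((-1) * (c - a))) / ((c - b) * (c - a))^2 * (1/3))
          * ((1 * ((c - b) * (c - a)) - (b - a) * ((-1) * (c - a))) / ((c - b) * (c - a))^2
              * ((1:ℝ)/3 - 1) * q ^ ((1:ℝ)/3 - 1 - 1)))) b := by
    have := ((hRb.mul_const (1/3 : ℝ)).mul hPb).const_mul K₃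
    simpa [hqdef] using this
  have d2 : deriv (deriv (fun y : ℝ => K₃ * ((y - a) / ((c - y) * (c - a))) ^ (1/3 : ℝ))) b
      = K₃ * (((((1 * ((-1) * (c - a)) - 1 * ((-1) * (c - a))) * ((c - b) * (c - a))^2
        - (1 * ((c - b) * (c - a)) - (b - a) * ((-1) * (c - a)))
            * (2 * ((c - b) * (c - a)) ^ 1 * ((-1) * (c - a))))
        / (((c - b) * (c - a))^2)^2) * (1/3)) * q ^ ((1:ℝ)/3 - 1)
        + ((1 * ((c - b) * (c - a)) - (b - a) * ((-1) * (c - a))) / ((c - b) * (c - a))^2 * (1/3))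
          * ((1 * ((c - b) * (c - a)) - (b - a) * ((-1) * (c - a))) / ((c - b) * (c - a))^2
              * ((1:ℝ)/3 - 1) * q ^ ((1:ℝ)/3 - 1 - 1))) := by
    rw [hEq.deriv_eq]
    exact hD2.deriv
  -- rewrite the goal
  simp only [hC]
  rw [d1, d3, d2]
  have e1 : q ^ ((1:ℝ)/3 - 1) = q ^ ((1:ℝ)/3) / q := by
    rw [Real.rpow_sub hq, Real.rpow_one]
  have e2 : q ^ ((1:ℝ)/3 - 1 - 1) = q ^ ((1:ℝ)/3) / q / q := by
    rw [Real.rpow_sub hq, Real.rpow_sub hq, Real.rpow_one]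
  have hq13 : ((b - a) / ((c - b) * (c - a))) ^ ((1:ℝ)/3) = q ^ ((1:ℝ)/3) := by rw [hqdef]
  rw [e1, e2, hq13, hqdef]
  have h1 : a - b ≠ 0 := by linarith
  have h2 : c - b ≠ 0 := hcb.ne'
  have h3 : c - a ≠ 0 := hca.ne'
  have h4 : b - a ≠ 0 := hba.ne'
  field_simp
  ring
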